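/- Let 𝒜 = {[a_m,b_m] : m ∈ ℕ} be a standard sequence. Then ⋃𝒜, with the subspace topology inherited from 𝕄, is homeomorphic to 𝕄, and 𝕄*_𝒜 := cl_{β𝕄}(⋃𝒜) ∖ 𝕄 is homeomorphic to 𝕄*. -/

import Mathlib

open Set Topology Filter

noncomputable section

/-- The unit interval `[0,1] ⊆ ℝ`. -/
abbrev UnitI : Type := Set.Icc (0:ℝ) 1

/-- The space `𝕄 = ℕ × [0,1]`. -/
abbrev Mspace : Type := ℕ × UnitI

/-- `β𝕄`, the Stone–Čech compactification of `𝕄`. -/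
abbrev betaM : Type := StoneCech Mspace

/-- The copy of `𝕄` inside `β𝕄`. -/
def Mcopy : Set betaM := Set.range (stoneCechUnit : Mspace → betaM)

/-- `𝕄* = β𝕄 ∖ 𝕄`. -/
def MstarS : Set betaM := Mcopyᶜ

/-- `A* = cl_{β𝕄}(A) ∖ 𝕄` for `A ⊆ 𝕄`. -/
def mstar (A : Set Mspace) : Set betaM := closure (stoneCechUnit '' A) \ Mcopy

/-- The interval `{n} × [s,t]` inside `𝕄`. -/
def colIcc (n : ℕ) (s t : ℝ) : Set Mspace :=
  {p : Mspace | p.1 = n ∧ s ≤ (p.2 : ℝ) ∧ (p.2 : ℝ) ≤ t}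

/-- The data `(col, lo, hi)` describes a standard sequence: the intervals
`{col m} × [lo m, hi m]` are nondegenerate closed subintervals of single columns of `𝕄`,
pairwise disjoint, forming a locally finite family in `𝕄`. -/
def IsStdSeqData (col : ℕ → ℕ) (lo hi : ℕ → ℝ) : Prop :=
  (∀ m, 0 ≤ lo m ∧ lo m < hi m ∧ hi m ≤ 1) ∧
  (Pairwise fun m k => Disjoint (colIcc (col m) (lo m) (hi m)) (colIcc (col k) (lo k) (hi k))) ∧
  LocallyFinite (fun m => colIcc (col m) (lo m) (hi m))

/-- A standard sequence `{[a_m,b_m] : m ∈ ℕ}`. -/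
structure StdSeq where
  col : ℕ → ℕ
  lo : ℕ → ℝ
  hi : ℕ → ℝ
  std : IsStdSeqData col lo hi

/-- The `m`-th interval `[a_m,b_m]` of a standard sequence. -/
def StdSeq.interval (A : StdSeq) (m : ℕ) : Set Mspace := colIcc (A.col m) (A.lo m) (A.hi m)

/-- `⋃𝒜`. -/
def StdSeq.union (A : StdSeq) : Set Mspace := ⋃ m, A.interval m

/-- `𝕄*_𝒜 = cl_{β𝕄}(⋃𝒜) ∖ 𝕄`. -/
def StdSeq.mstarOf (A : StdSeq) : Set betaM := mstar A.union


namespace StdSeqAux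

lemma isClosed_colIcc (n : ℕ) (s t : ℝ) : IsClosed (colIcc n s t) := by
  have h1 : IsClosed {p : Mspace | p.1 = n} :=
    (isClosed_singleton (x := n)).preimage continuous_fst
  have h2 : IsClosed {p : Mspace | s ≤ ((p.2 : ℝ))} :=
    isClosed_le continuous_const (continuous_subtype_val.comp continuous_snd)
  have h3 : IsClosed {p : Mspace | ((p.2 : ℝ)) ≤ t} :=
    isClosed_le (continuous_subtype_val.comp continuous_snd) continuous_const
  have : colIcc n s t
      = {p : Mspace | p.1 = n} ∩ ({p : Mspace | s ≤ ((p.2:ℝ))} ∩ {p : Mspace | ((p.2:ℝ)) ≤ t}) := by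
    ext p; simp [colIcc, and_assoc]
  rw [this]
  exact h1.inter (h2.inter h3)

variable (A : StdSeq)

lemma lo_nonneg (m : ℕ) : 0 ≤ A.lo m := (A.std.1 m).1
lemma lo_lt_hi (m : ℕ) : A.lo m < A.hi m := (A.std.1 m).2.1
lemma hi_le_one (m : ℕ) : A.hi m ≤ 1 := (A.std.1 m).2.2

lemma isClosed_interval (m : ℕ) : IsClosed (A.interval m) := isClosed_colIcc _ _ _

lemma mem_union_iff {p : Mspace} : p ∈ A.union ↔ ∃ m, p ∈ A.interval m := by
  simp [StdSeq.union]

open Classical in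
/-- The index of the interval containing `p`. -/
noncomputable def idx (p : Mspace) : ℕ :=
  if h : ∃ m, p ∈ A.interval m then h.choose else 0

lemma mem_interval_idx {p : Mspace} (hp : p ∈ A.union) : p ∈ A.interval (idx A p) := by
  rw [mem_union_iff] at hp
  rw [idx, dif_pos hp]
  exact hp.choose_spec

lemma idx_eq {p : Mspace} {m : ℕ} (hm : p ∈ A.interval m) : idx A p = m := by
  have hp : p ∈ A.union := (mem_union_iff A).2 ⟨m, hm⟩
  by_contra hne
  exact Set.disjoint_left.mp (A.std.2.1 hne) (mem_interval_idx A hp) hm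

lemma projIcc_coe (v : ℝ) (hv : v ∈ Set.Icc (0:ℝ) 1) :
    ((Set.projIcc (0:ℝ) 1 zero_le_one v : UnitI) : ℝ) = v := by
  rw [Set.coe_projIcc, min_eq_right hv.2, max_eq_right hv.1]

lemma projIcc_eq_self (x : UnitI) : Set.projIcc (0:ℝ) 1 zero_le_one (x : ℝ) = x :=
  Subtype.ext (projIcc_coe _ x.2)

/-- The forward map `⋃𝒜 → 𝕄` (as a raw map on `𝕄`). -/
noncomputable def fwd (p : Mspace) : Mspace :=
  (idx A p,
    Set.projIcc (0:ℝ) 1 zero_le_one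
      (((p.2 : ℝ) - A.lo (idx A p)) / (A.hi (idx A p) - A.lo (idx A p))))

/-- The backward map `𝕄 → ⋃𝒜` (as a raw map on `𝕄`). -/
noncomputable def bwd (q : Mspace) : Mspace :=
  (A.col q.1,
    Set.projIcc (0:ℝ) 1 zero_le_one
      (A.lo q.1 + (q.2 : ℝ) * (A.hi q.1 - A.lo q.1)))

lemma bwd_snd (q : Mspace) :
    ((bwd A q).2 : ℝ) = A.lo q.1 + (q.2 : ℝ) * (A.hi q.1 - A.lo q.1) := by
  have h1 : (0:ℝ) ≤ (q.2 : ℝ) := q.2.2.1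
  have h2 : (q.2 : ℝ) ≤ 1 := q.2.2.2
  have hlh := lo_lt_hi A q.1
  have hmem : A.lo q.1 + (q.2 : ℝ) * (A.hi q.1 - A.lo q.1) ∈ Set.Icc (0:ℝ) 1 := by
    constructor
    · have : (0:ℝ) ≤ (q.2 : ℝ) * (A.hi q.1 - A.lo q.1) :=
        mul_nonneg h1 (by linarith)
      have := lo_nonneg A q.1
      linarith
    · have : (q.2 : ℝ) * (A.hi q.1 - A.lo q.1) ≤ A.hi q.1 - A.lo q.1 := by
        nlinarith
      have := hi_le_one A q.1
      linarith
  show ((Set.projIcc (0:ℝ) 1 zero_le_one _ : UnitI) : ℝ) = _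
  exact projIcc_coe _ hmem

lemma bwd_mem_interval (q : Mspace) : bwd A q ∈ A.interval q.1 := by
  have h1 : (0:ℝ) ≤ (q.2 : ℝ) := q.2.2.1
  have h2 : (q.2 : ℝ) ≤ 1 := q.2.2.2
  have hlh := lo_lt_hi A q.1
  refine ⟨rfl, ?_, ?_⟩ <;> rw [bwd_snd]
  · nlinarith
  · nlinarith

lemma bwd_mem_union (q : Mspace) : bwd A q ∈ A.union :=
  (mem_union_iff A).2 ⟨q.1, bwd_mem_interval A q⟩

lemma fwd_bwd (q : Mspace) : fwd A (bwd A q) = q := by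
  have hidx : idx A (bwd A q) = q.1 := idx_eq A (bwd_mem_interval A q)
  have hlh := lo_lt_hi A q.1
  have hne : A.hi q.1 - A.lo q.1 ≠ 0 := by linarith
  have hval : (((bwd A q).2 : ℝ) - A.lo q.1) / (A.hi q.1 - A.lo q.1) = (q.2 : ℝ) := by
    rw [bwd_snd]
    field_simp
    ring
  rw [fwd, hidx, hval]
  exact Prod.ext rfl (projIcc_eq_self q.2)

lemma fwd_snd {p : Mspace} (hp : p ∈ A.union) :
    ((fwd A p).2 : ℝ)
      = ((p.2 : ℝ) - A.lo (idx A p)) / (A.hi (idx A p) - A.lo (idx A p)) := by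
  obtain ⟨-, hl, hh⟩ := mem_interval_idx A hp
  have hlh := lo_lt_hi A (idx A p)
  have hmem : ((p.2 : ℝ) - A.lo (idx A p)) / (A.hi (idx A p) - A.lo (idx A p))
      ∈ Set.Icc (0:ℝ) 1 := by
    constructor
    · apply div_nonneg <;> linarith
    · rw [div_le_one (by linarith)]; linarith
  show ((Set.projIcc (0:ℝ) 1 zero_le_one _ : UnitI) : ℝ) = _
  exact projIcc_coe _ hmem

lemma bwd_fwd {p : Mspace} (hp : p ∈ A.union) : bwd A (fwd A p) = p := by
  obtain ⟨hcol, hl, hh⟩ := mem_interval_idx A hp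
  have hlh := lo_lt_hi A (idx A p)
  have hne : A.hi (idx A p) - A.lo (idx A p) ≠ 0 := by linarith
  have hfst : (fwd A p).1 = idx A p := rfl
  have hsnd : ((bwd A (fwd A p)).2 : ℝ) = (p.2 : ℝ) := by
    rw [bwd_snd, hfst, fwd_snd A hp]
    field_simp
    ring
  have h1 : (bwd A (fwd A p)).1 = p.1 := by
    rw [bwd, hfst]; exact hcol.symm
  exact Prod.ext h1 (Subtype.ext hsnd)

/-- Continuity of maps out of `ℕ × X`, columnwise. -/
lemma continuous_of_columns {X Y : Type*} [TopologicalSpace X] [TopologicalSpace Y]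
    {f : ℕ × X → Y} (h : ∀ n, Continuous fun x => f (n, x)) : Continuous f := by
  rw [continuous_iff_continuousAt]
  rintro ⟨n, x⟩
  rw [ContinuousAt, nhds_prod_eq, nhds_discrete, Filter.pure_prod, Filter.tendsto_map'_iff]
  exact (h n).tendsto x

lemma continuous_bwd : Continuous (bwd A) := by
  apply continuous_of_columns
  intro n
  show Continuous fun x : UnitI => ((A.col n,
    Set.projIcc (0:ℝ) 1 zero_le_one (A.lo n + (x : ℝ) * (A.hi n - A.lo n))) : Mspace)
  apply Continuous.prodMk continuous_const
  exact continuous_projIcc.comp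
    (by fun_prop)

/-- Locally, on the union, the index function is constant. -/
lemma idx_locally_const {p : Mspace} (_hp : p ∈ A.union) :
    ∃ V ∈ 𝓝 p, ∀ q ∈ V ∩ A.union, idx A q = idx A p := by
  obtain ⟨U, hU, hUfin⟩ := A.std.2.2 p
  set m₀ := idx A p with hm₀
  set S : Set ℕ := {m | (A.interval m ∩ U).Nonempty} \ {m₀} with hS
  have hSfin : S.Finite := hUfin.diff
  have hclosed : IsClosed (⋃ m ∈ S, A.interval m) :=
    hSfin.isClosed_biUnion fun m _ => isClosed_interval A m
  have hpnot : p ∉ ⋃ m ∈ S, A.interval m := by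
    intro hmem
    rw [Set.mem_iUnion₂] at hmem
    obtain ⟨m, hmS, hpm⟩ := hmem
    exact hmS.2 (idx_eq A hpm).symm
  refine ⟨U ∩ (⋃ m ∈ S, A.interval m)ᶜ, Filter.inter_mem hU
    (hclosed.isOpen_compl.mem_nhds hpnot), ?_⟩
  rintro q ⟨⟨hqU, hqcompl⟩, hqC⟩
  have hq := mem_interval_idx A hqC
  by_contra hne
  apply hqcompl
  rw [Set.mem_iUnion₂]
  exact ⟨idx A q, ⟨⟨q, hq, hqU⟩, hne⟩, hq⟩

lemma continuous_fwd_restrict : Continuous fun p : ↥A.union => fwd A p.val := by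
  rw [continuous_iff_continuousAt]
  rintro ⟨p, hp⟩
  obtain ⟨V, hV, hVconst⟩ := idx_locally_const A hp
  set m₀ := idx A p with hm₀
  have hGcont : Continuous fun q : Mspace =>
      ((m₀, Set.projIcc (0:ℝ) 1 zero_le_one
        (((q.2 : ℝ) - A.lo m₀) / (A.hi m₀ - A.lo m₀))) : Mspace) := by
    apply Continuous.prodMk continuous_const
    exact continuous_projIcc.comp (by fun_prop)
  have hVpre : (Subtype.val : ↥A.union → Mspace) ⁻¹' V ∈ 𝓝 (⟨p, hp⟩ : ↥A.union) :=
    continuous_subtype_val.continuousAt.preimage_mem_nhds hV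
  have heq : (fun q : ↥A.union => fwd A q.val)
      =ᶠ[𝓝 (⟨p, hp⟩ : ↥A.union)]
      fun q : ↥A.union =>
        ((m₀, Set.projIcc (0:ℝ) 1 zero_le_one
          (((q.val.2 : ℝ) - A.lo m₀) / (A.hi m₀ - A.lo m₀))) : Mspace) := by
    filter_upwards [hVpre] with q hqV
    have : idx A q.val = m₀ := hVconst q.val ⟨hqV, q.2⟩
    rw [fwd, this]
  exact (ContinuousAt.congr ((hGcont.comp continuous_subtype_val).continuousAt) heq.symm)

/-- The homeomorphism `⋃𝒜 ≃ₜ 𝕄`. -/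
noncomputable def unionHomeo : ↥A.union ≃ₜ Mspace where
  toFun := fun p => fwd A p.val
  invFun := fun q => ⟨bwd A q, bwd_mem_union A q⟩
  left_inv := fun p => Subtype.ext (bwd_fwd A p.2)
  right_inv := fun q => fwd_bwd A q
  continuous_toFun := continuous_fwd_restrict A
  continuous_invFun := (continuous_bwd A).subtype_mk _

lemma isClosed_union : IsClosed A.union :=
  A.std.2.2.isClosed_iUnion fun m => isClosed_interval A m

/-! ### Part 2: the Stone–Čech part -/

noncomputable def f₀ : Mspace → betaM := fun x => stoneCechUnit (((unionHomeo A).symm x : ↥A.union) : Mspace)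

lemma continuous_f₀ : Continuous (f₀ A) :=
  continuous_stoneCechUnit.comp (continuous_subtype_val.comp (unionHomeo A).symm.continuous)

/-- The Stone–Čech extension of `u ∘ h⁻¹`. -/
noncomputable def bigK : betaM → betaM := stoneCechExtend (continuous_f₀ A)

lemma continuous_bigK : Continuous (bigK A) := continuous_stoneCechExtend _

lemma bigK_unit (x : Mspace) :
    bigK A (stoneCechUnit x) = stoneCechUnit (((unionHomeo A).symm x : ↥A.union) : Mspace) :=
  congrFun (stoneCechExtend_extends (continuous_f₀ A)) x

lemma bigK_unit_mem (c : Mspace) (hc : c ∈ A.union) :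
    bigK A (stoneCechUnit (unionHomeo A ⟨c, hc⟩)) = stoneCechUnit c := by
  rw [bigK_unit, Homeomorph.symm_apply_apply]

/-- Separation: points of `𝕄` outside the closed set `⋃𝒜` are not in the closure of its copy. -/
lemma unit_not_mem_closure {x : Mspace} (hx : x ∉ A.union) :
    stoneCechUnit x ∉ closure (stoneCechUnit '' A.union) := by
  obtain ⟨φ, hφ0, hφ1, hφmem⟩ :=
    exists_continuous_zero_one_of_isClosed (isClosed_union A)
      (isClosed_singleton (x := x))
      (by simp [Set.disjoint_singleton_right, hx])
  set φI : Mspace → UnitI := fun y => ⟨φ y, hφmem y⟩ with hφI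
  have hφIc : Continuous φI := φ.continuous.subtype_mk _
  set P : betaM → UnitI := stoneCechExtend hφIc with hP
  have hPu : ∀ y, P (stoneCechUnit y) = φI y := fun y => congrFun (stoneCechExtend_extends hφIc) y
  have hclosed : IsClosed (P ⁻¹' {(⟨0, by norm_num⟩ : UnitI)}) :=
    (isClosed_singleton).preimage (continuous_stoneCechExtend _)
  have hsubset : closure (stoneCechUnit '' A.union) ⊆ P ⁻¹' {(⟨0, by norm_num⟩ : UnitI)} := by
    apply closure_minimal _ hclosed
    rintro _ ⟨c, hc, rfl⟩
    have : φ c = 0 := hφ0 hc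
    simp only [Set.mem_preimage, hPu, Set.mem_singleton_iff, hφI]
    exact Subtype.ext (by simpa using this)
  intro hmem
  have h1 : P (stoneCechUnit x) = ⟨0, by norm_num⟩ := hsubset hmem
  have h2 : φ x = 1 := hφ1 rfl
  rw [hPu] at h1
  have : φ x = 0 := congrArg Subtype.val h1
  rw [h2] at this
  norm_num at this

lemma bigK_injective : Function.Injective (bigK A) := by
  intro z₁ z₂ hzz
  by_contra hne
  obtain ⟨φ, hφ0, hφ1, hφmem⟩ :=
    exists_continuous_zero_one_of_isClosed (isClosed_singleton (x := z₁))
      (isClosed_singleton (x := z₂)) (by simp [hne])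
  -- the function on ⋃𝒜 to extend
  set t : C(↥A.union, ℝ) :=
    φ.comp ⟨fun c => stoneCechUnit (unionHomeo A c),
      continuous_stoneCechUnit.comp (unionHomeo A).continuous⟩ with ht
  have htmem : ∀ c, t c ∈ Set.Icc (0:ℝ) 1 := fun c => hφmem _
  obtain ⟨T, hTmem, hTrestrict⟩ :=
    ContinuousMap.exists_restrict_eq_forall_mem_of_closed t htmem
      ⟨0, by norm_num⟩ (isClosed_union A)
  set TI : Mspace → UnitI := fun y => ⟨T y, hTmem y⟩ with hTI
  have hTIc : Continuous TI := T.continuous.subtype_mk _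
  set Φ : betaM → UnitI := stoneCechExtend hTIc with hΦ
  have hΦu : ∀ y, Φ (stoneCechUnit y) = TI y := fun y => congrFun (stoneCechExtend_extends hTIc) y
  set ψ : betaM → UnitI := fun z => ⟨φ z, hφmem z⟩ with hψ
  have hψc : Continuous ψ := φ.continuous.subtype_mk _
  have hkey : Φ ∘ bigK A = ψ := by
    apply denseRange_stoneCechUnit.equalizer
      ((continuous_stoneCechExtend _).comp (continuous_bigK A)) hψc
    funext x
    show Φ (bigK A (stoneCechUnit x)) = ψ (stoneCechUnit x)
    have h1 : (Φ ∘ bigK A) (stoneCechUnit x)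
        = TI (((unionHomeo A).symm x : ↥A.union) : Mspace) := by
      simp only [Function.comp_apply, bigK_unit, hΦu]
    have h2 : T (((unionHomeo A).symm x : ↥A.union) : Mspace) = t ((unionHomeo A).symm x) := by
      have := congrFun (congrArg (fun f : C(↥A.union, ℝ) => (f : ↥A.union → ℝ)) hTrestrict)
        ((unionHomeo A).symm x)
      simpa using this
    have h3 : t ((unionHomeo A).symm x) = φ (stoneCechUnit x) := by
      simp only [ht, ContinuousMap.comp_apply, ContinuousMap.coe_mk, Homeomorph.apply_symm_apply]
    simp only [Function.comp_apply] at h1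
    rw [h1]
    apply Subtype.ext
    simp only [hTI, hψ, h2, h3]
  have e1 : ψ z₁ = ψ z₂ := by rw [← hkey]; simp [Function.comp_apply, hzz]
  have e2 : φ z₁ = φ z₂ := congrArg Subtype.val e1
  have h01 : (0:ℝ) = 1 := by
    have a1 : φ z₁ = 0 := hφ0 rfl
    have a2 : φ z₂ = 1 := hφ1 rfl
    rw [a1, a2] at e2; exact e2
  norm_num at h01

lemma range_bigK : Set.range (bigK A) = closure (stoneCechUnit '' A.union) := by
  apply Set.Subset.antisymm
  · rintro _ ⟨z, rfl⟩
    have hz : z ∈ closure (Set.range (stoneCechUnit : Mspace → betaM)) := by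
      rw [denseRange_stoneCechUnit.closure_range]; trivial
    have h1 : bigK A z ∈ closure (bigK A '' Set.range stoneCechUnit) :=
      (image_closure_subset_closure_image (continuous_bigK A)) ⟨z, hz, rfl⟩
    refine closure_mono ?_ h1
    rintro _ ⟨_, ⟨x, rfl⟩, rfl⟩
    exact ⟨((unionHomeo A).symm x : ↥A.union), ((unionHomeo A).symm x).2, (bigK_unit A x).symm⟩
  · apply closure_minimal
    · rintro _ ⟨c, hc, rfl⟩
      exact ⟨stoneCechUnit (unionHomeo A ⟨c, hc⟩), bigK_unit_mem A c hc⟩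
    · exact (isCompact_range (continuous_bigK A)).isClosed

lemma bigK_mem_closure (z : betaM) : bigK A z ∈ closure (stoneCechUnit '' A.union) := by
  rw [← range_bigK]; exact ⟨z, rfl⟩

lemma bigK_not_mcopy {z : betaM} (hz : z ∉ Mcopy) : bigK A z ∉ Mcopy := by
  rintro ⟨x, hx⟩
  by_cases hxC : x ∈ A.union
  · have h0 : bigK A (stoneCechUnit (unionHomeo A ⟨x, hxC⟩)) = stoneCechUnit x :=
      bigK_unit_mem A x hxC
    have hzx : z = stoneCechUnit (unionHomeo A ⟨x, hxC⟩) :=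
      bigK_injective A (by rw [h0, hx])
    exact hz ⟨_, hzx.symm⟩
  · have h1 : stoneCechUnit x ∉ closure (stoneCechUnit '' A.union) := unit_not_mem_closure A hxC
    exact h1 (by rw [hx]; exact bigK_mem_closure A z)

lemma bigK_isClosedEmbedding : IsClosedEmbedding (bigK A) :=
  (continuous_bigK A).isClosedEmbedding (bigK_injective A)

/-- The restricted map `𝕄* → 𝕄*_𝒜`. -/
noncomputable def starMap : ↥MstarS → ↥A.mstarOf := fun z =>
  ⟨bigK A z.val, bigK_mem_closure A z.val, bigK_not_mcopy A z.2⟩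

lemma starMap_bijective : Function.Bijective (starMap A) := by
  constructor
  · intro z₁ z₂ h
    exact Subtype.ext (bigK_injective A (congrArg Subtype.val h))
  · rintro ⟨y, hy1, hy2⟩
    have hy1' : y ∈ Set.range (bigK A) := by rw [range_bigK]; exact hy1
    obtain ⟨z, rfl⟩ := hy1'
    have hz : z ∉ Mcopy := by
      rintro ⟨x, rfl⟩
      exact hy2 ⟨_, (bigK_unit A x).symm⟩
    exact ⟨⟨z, hz⟩, rfl⟩

lemma continuous_starMap : Continuous (starMap A) :=
  ((continuous_bigK A).comp continuous_subtype_val).subtype_mk _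

lemma isInducing_starMap : IsInducing (starMap A) := by
  apply IsInducing.of_comp (continuous_starMap A) continuous_subtype_val
  have hcomp : (Subtype.val ∘ starMap A) = bigK A ∘ (Subtype.val : ↥MstarS → betaM) := rfl
  rw [hcomp]
  exact (bigK_isClosedEmbedding A).isInducing.comp IsInducing.subtypeVal

/-- The homeomorphism `𝕄* ≃ₜ 𝕄*_𝒜`. -/
noncomputable def starHomeo : ↥MstarS ≃ₜ ↥A.mstarOf :=
  (Equiv.ofBijective _ (starMap_bijective A)).toHomeomorphOfIsInducing
    (isInducing_starMap A)

end StdSeqAux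

/-- if `𝒜` is a standard sequence then `⋃𝒜` (with the subspace topology)
is homeomorphic to `𝕄`, and `𝕄*_𝒜` is homeomorphic to `𝕄*`. -/
theorem stdSeq_union_homeo_M_and_mstarOf_homeo_Mstar (A : StdSeq) :
    Nonempty (↥A.union ≃ₜ Mspace) ∧ Nonempty (↥A.mstarOf ≃ₜ ↥MstarS) := by
  exact ⟨⟨StdSeqAux.unionHomeo A⟩, ⟨(StdSeqAux.starHomeo A).symm⟩⟩
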